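/- arXiv:2503.13085 — 2 statements merged into one kernel-verified Lean document; each statement's English description precedes it below -/
import Mathlib

section
/- Let V be a set of vertices containing an end-depot vertex d, let t : V × V → ℝ be nonnegative travel times satisfying the triangle inequality t(j, d) ≤ t(j, k) + t(k, d) for all j, k ∈ V, and let u : V → ℝ be nonnegative service times. Consider a route v₀, v₁, …, v_m with v_m = d together with a schedule B such that B(v_{r+1}) ≥ B(v_r) + u(v_r) + t(v_r, v_{r+1}) for every consecutive pair and B(d) ≤ l_d. Then B(v_r) ≤ l_d − u(v_r) − t(v_r, d) for every r < m. Consequently, replacing each latest service time l_i by min(l_i, l_d − u_i − t(i, d)) does not eliminate any feasible schedule. -/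
/-- Validity of the backward time-window tightening rule.  Let `t` be nonnegative travel
times satisfying the triangle inequality towards the end depot `d`, and `u` nonnegative
service times.  Consider a route `v 0, v 1, …, v m` ending at the depot (`v m = d`) with a
schedule `B` satisfying `B(v (r+1)) ≥ B(v r) + u(v r) + t(v r, v (r+1))` for every
consecutive pair and `B(d) ≤ l_d`.  Then `B(v r) ≤ l_d - u(v r) - t(v r, d)` for every
`r < m`; consequently, replacing each latest service time `l i` by
`min (l i) (l_d - u i - t(i, d))` does not eliminate any feasible schedule. -/
theorem backward_time_window_tightening {V : Type*}
    (d : V) (t : V → V → ℝ) (u : V → ℝ) (l_d : ℝ)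
    (ht : ∀ j k, 0 ≤ t j k)
    (htri : ∀ j k : V, t j d ≤ t j k + t k d)
    (hu : ∀ j, 0 ≤ u j)
    (m : ℕ) (v : ℕ → V) (hvm : v m = d)
    (B : V → ℝ)
    (hBd : B d ≤ l_d)
    (hstep : ∀ r < m, B (v r) + u (v r) + t (v r) (v (r + 1)) ≤ B (v (r + 1))) :
    (∀ r < m, B (v r) ≤ l_d - u (v r) - t (v r) d) ∧
    (∀ l : V → ℝ, (∀ r ≤ m, B (v r) ≤ l (v r)) →
      ∀ r < m, B (v r) ≤ min (l (v r)) (l_d - u (v r) - t (v r) d)) := by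
  have key : ∀ k r, r + k = m → r < m → B (v r) + u (v r) + t (v r) d ≤ B (v m) := by
    intro k
    induction k with
    | zero => intro r h hr; omega
    | succ k ih =>
      intro r h hr
      rcases Nat.eq_or_lt_of_le (Nat.succ_le_of_lt hr) with heq | hlt
      · have h2 := hstep r hr
        have hd : v (r + 1) = d := by rw [show r + 1 = m from heq, hvm]
        rw [hd] at h2
        rw [hvm]
        exact h2
      · have h1 : t (v r) d ≤ t (v r) (v (r + 1)) + t (v (r + 1)) d := htri _ _
        have h2 := hstep r hr
        have h3 := ih (r + 1) (by omega) hlt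
        have h4 := hu (v (r + 1))
        linarith
  have main : ∀ r < m, B (v r) ≤ l_d - u (v r) - t (v r) d := by
    intro r hr
    have := key (m - r) r (by omega) hr
    rw [hvm] at this
    linarith
  refine ⟨main, fun l hl r hr => le_min (hl r hr.le) (main r hr)⟩
end

section
/- Let n+i and n+j be two drop-off vertices, i and j the respective companion pickup vertices of two other requests, and s a charger vertex that appears at most once among all routes of a solution. Suppose both detour paths are time-window infeasible, i.e., e(n+i) + u(n+i) + t(n+i, s) + u(s) + t(s, j) > l(j) and e(n+j) + u(n+j) + t(n+j, s) + u(s) + t(s, i) > l(i). Then in any solution whose routes admit schedules B with B(v) ≥ e(v) and B(v) ≤ l(v) at pickup/drop-off vertices and B(v_{r+1}) ≥ B(v_r) + u(v_r) + t(v_r, v_{r+1}) for consecutive vertices, at most one of the four arcs (n+i → s), (s → j), (n+j → s), (s → i) appears as a consecutive pair on a route. Hence the valid inequality that the total usage of these four arcs is bounded by 1 does not cut off any feasible solution. -/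
/-- Validity of the charger valid inequality (Eq. (39)).  Let `di = n+i` and `dj = n+j` be
the drop-off vertices of two requests, `pi` and `pj` their companion pickup vertices, and
`s` a charger vertex that appears at most once among all routes of a solution.  Suppose
both detour paths are time-window infeasible:
`e(di) + u(di) + t(di,s) + u(s) + t(s,pj) > l(pj)` and
`e(dj) + u(dj) + t(dj,s) + u(s) + t(s,pi) > l(pi)`.
Then, in any solution whose routes admit schedules respecting the time windows at the
pickup/drop-off vertices and the consecutive-vertex timing constraints (and in which each
request is served by a single vehicle, the pickup being visited exactly once and before its
drop-off), at most one of the four arcs `(di → s)`, `(s → pj)`, `(dj → s)`, `(s → pi)`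
appears as a consecutive pair on a route.  Hence the valid inequality bounding the total
usage of these four arcs by `1` does not cut off any feasible solution. -/
theorem charger_valid_inequality {V K : Type*}
    (pi pj di dj s : V)
    (t : V → V → ℝ) (u : V → ℝ) (e l : V → ℝ)
    (ht : ∀ x y, 0 ≤ t x y) (hu : ∀ x, 0 ≤ u x)
    -- the five vertices are pairwise distinct
    (hpipj : pi ≠ pj) (hpidi : pi ≠ di) (hpidj : pi ≠ dj) (hpis : pi ≠ s)
    (hpjdi : pj ≠ di) (hpjdj : pj ≠ dj) (hpjs : pj ≠ s)
    (hdidj : di ≠ dj) (hdis : di ≠ s) (hdjs : dj ≠ s)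
    -- both detour paths are time-window infeasible
    (hinfeas₁ : l pj < e di + u di + t di s + u s + t s pj)
    (hinfeas₂ : l pi < e dj + u dj + t dj s + u s + t s pi)
    -- a solution: a family of routes `v k` of length `m k` with schedules `B k`
    (m : K → ℕ) (v : K → ℕ → V) (B : K → ℕ → ℝ)
    (hstep : ∀ k, ∀ r < m k,
      B k r + u (v k r) + t (v k r) (v k (r + 1)) ≤ B k (r + 1))
    -- time windows hold at the four pickup/drop-off vertices
    (htw : ∀ k, ∀ r ≤ m k,
      (v k r = pi ∨ v k r = pj ∨ v k r = di ∨ v k r = dj) →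
        e (v k r) ≤ B k r ∧ B k r ≤ l (v k r))
    -- the charger vertex `s` appears at most once among all routes
    (hs_once : ∀ k k' r r', r ≤ m k → r' ≤ m k' →
      v k r = s → v k' r' = s → k = k' ∧ r = r')
    -- each pickup vertex is visited at most once among all routes
    (hpi_once : ∀ k k' r r', r ≤ m k → r' ≤ m k' →
      v k r = pi → v k' r' = pi → k = k' ∧ r = r')
    (hpj_once : ∀ k k' r r', r ≤ m k → r' ≤ m k' →
      v k r = pj → v k' r' = pj → k = k' ∧ r = r')
    -- precedence: a drop-off is visited after its pickup on the same route
    (hprec_i : ∀ k, ∀ r ≤ m k, v k r = di → ∃ r' < r, v k r' = pi)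
    (hprec_j : ∀ k, ∀ r ≤ m k, v k r = dj → ∃ r' < r, v k r' = pj) :
    -- at most one of the four arcs is used
    let UsedArc : V → V → Prop :=
      fun x y => ∃ k, ∃ r, r + 1 ≤ m k ∧ v k r = x ∧ v k (r + 1) = y
    ¬(UsedArc di s ∧ UsedArc s pj) ∧ ¬(UsedArc di s ∧ UsedArc dj s) ∧
    ¬(UsedArc di s ∧ UsedArc s pi) ∧ ¬(UsedArc s pj ∧ UsedArc dj s) ∧
    ¬(UsedArc s pj ∧ UsedArc s pi) ∧ ¬(UsedArc dj s ∧ UsedArc s pi) := by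
  intro UsedArc
  -- timing helper: a path d -> s -> p with infeasible detour yields a contradiction
  have timing : ∀ (k : K) (r : ℕ) (d p : V), r + 2 ≤ m k →
      v k r = d → v k (r + 1) = s → v k (r + 2) = p →
      (d = pi ∨ d = pj ∨ d = di ∨ d = dj) → (p = pi ∨ p = pj ∨ p = di ∨ p = dj) →
      l p < e d + u d + t d s + u s + t s p → False := by
    intro k r d p hr hvd hvs hvp hdmem hpmem hinf
    have hr0 : r ≤ m k := by omega
    have hr1 : r + 1 ≤ m k := by omega
    have h1 : B k r + u (v k r) + t (v k r) (v k (r+1)) ≤ B k (r+1) :=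
      hstep k r (by omega)
    have h2 : B k (r+1) + u (v k (r+1)) + t (v k (r+1)) (v k (r+1+1)) ≤ B k (r+1+1) :=
      hstep k (r+1) (by omega)
    rw [hvd, hvs] at h1
    rw [hvs, show r+1+1 = r+2 from rfl, hvp] at h2
    have htw1 := htw k r hr0 (by rw [hvd]; exact hdmem)
    have htw2 := htw k (r+2) hr (by rw [hvp]; exact hpmem)
    rw [hvd] at htw1
    rw [hvp] at htw2
    have := htw1.1
    have := htw2.2
    linarith
  refine ⟨?_, ?_, ?_, ?_, ?_, ?_⟩
  · rintro ⟨⟨k, r, hr, hx, hy⟩, ⟨k', r', hr', hx', hy'⟩⟩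
    obtain ⟨rfl, hre⟩ := hs_once k k' (r+1) r' hr (by omega) hy hx'
    subst hre
    exact timing k r di pj (by omega) hx hy hy' (by tauto) (by tauto) hinfeas₁
  · rintro ⟨⟨k, r, hr, hx, hy⟩, ⟨k', r', hr', hx', hy'⟩⟩
    obtain ⟨rfl, hre⟩ := hs_once k k' (r+1) (r'+1) hr hr' hy hy'
    have : r = r' := by omega
    subst this
    exact hdidj (hx ▸ hx'.symm ▸ rfl)
  · rintro ⟨⟨k, r, hr, hx, hy⟩, ⟨k', r', hr', hx', hy'⟩⟩
    obtain ⟨rfl, hre⟩ := hs_once k k' (r+1) r' hr (by omega) hy hx'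
    subst hre
    -- route: di at r, s at r+1, pi at r+2; precedence needs pi before r
    obtain ⟨q, hq, hvq⟩ := hprec_i k r (by omega) hx
    obtain ⟨-, hre⟩ := hpi_once k k q (r+2) (by omega) (by omega) hvq hy'
    omega
  · rintro ⟨⟨k, r, hr, hx, hy⟩, ⟨k', r', hr', hx', hy'⟩⟩
    obtain ⟨rfl, hre⟩ := hs_once k k' r (r'+1) (by omega) hr' hx hy'
    subst hre
    -- route: dj at r', s at r'+1, pj at r'+2; precedence needs pj before r'
    obtain ⟨q, hq, hvq⟩ := hprec_j k r' (by omega) hx'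
    obtain ⟨-, hre⟩ := hpj_once k k q (r'+1+1) (by omega) (by omega) hvq hy
    omega
  · rintro ⟨⟨k, r, hr, hx, hy⟩, ⟨k', r', hr', hx', hy'⟩⟩
    obtain ⟨rfl, hre⟩ := hs_once k k' r r' (by omega) (by omega) hx hx'
    subst hre
    exact hpipj (hy' ▸ hy.symm ▸ rfl)
  · rintro ⟨⟨k, r, hr, hx, hy⟩, ⟨k', r', hr', hx', hy'⟩⟩
    obtain ⟨rfl, hre⟩ := hs_once k k' (r+1) r' hr (by omega) hy hx'
    subst hre
    exact timing k r dj pi (by omega) hx hy hy' (by tauto) (by tauto) hinfeas₂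
end
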